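/- The map f(x₁,x₂) = e^{x₂}(x₁,x₂) cannot be written, on any neighborhood of the origin, as a composition ∇ψ ∘ ∇φ of two gradient local diffeomorphisms: if ∇u ∘ f = ∇φ near 0 with u, φ twice continuously differentiable and ∇u a local diffeomorphism, a contradiction follows. Specifically, the compatibility condition forces ξ ∂²₁₁u(ξ,η) + η ∂²₁₂u(ξ,η) = 0 near (0,0), whence ∂₁u is locally constant and ∇u has singular derivative. -/

import Mathlib

open Real Set Metric Topology

noncomputable section

def fmap : ℝ × ℝ → ℝ × ℝ := fun x => (x.1 * Real.exp x.2, x.2 * Real.exp x.2)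

def L1 (x : ℝ × ℝ) : (ℝ × ℝ) →L[ℝ] ℝ :=
  x.1 • (Real.exp x.2 • ContinuousLinearMap.snd ℝ ℝ ℝ) + Real.exp x.2 • ContinuousLinearMap.fst ℝ ℝ ℝ
def L2 (x : ℝ × ℝ) : (ℝ × ℝ) →L[ℝ] ℝ :=
  x.2 • (Real.exp x.2 • ContinuousLinearMap.snd ℝ ℝ ℝ) + Real.exp x.2 • ContinuousLinearMap.snd ℝ ℝ ℝ
def Fd (x : ℝ × ℝ) : (ℝ × ℝ) →L[ℝ] ℝ × ℝ := (L1 x).prod (L2 x)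

lemma hexp_snd (x : ℝ × ℝ) : HasStrictFDerivAt (fun y : ℝ × ℝ => Real.exp y.2)
    (Real.exp x.2 • ContinuousLinearMap.snd ℝ ℝ ℝ) x :=
  (Real.hasStrictDerivAt_exp x.2).comp_hasStrictFDerivAt x hasStrictFDerivAt_snd

lemma hf_deriv (x : ℝ × ℝ) : HasStrictFDerivAt fmap (Fd x) x :=
  HasStrictFDerivAt.prodMk (hasStrictFDerivAt_fst.mul (hexp_snd x)) (hasStrictFDerivAt_snd.mul (hexp_snd x))

lemma Fd_e1 (x : ℝ × ℝ) : Fd x (1, 0) = (Real.exp x.2, 0) := by simp [Fd, L1, L2]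

lemma Fd_e2 (x : ℝ × ℝ) : Fd x (0, 1) = (x.1 * Real.exp x.2, Real.exp x.2 + x.2 * Real.exp x.2) := by
  simp [Fd, L1, L2]; ring

lemma hasFDerivAt_fderiv_apply {w : ℝ × ℝ → ℝ} {q : ℝ × ℝ} (v : ℝ × ℝ)
    (h : ContDiffAt ℝ 2 w q) :
    HasFDerivAt (fun y => fderiv ℝ w y v)
      ((ContinuousLinearMap.apply ℝ ℝ v).comp (fderiv ℝ (fderiv ℝ w) q)) q := by
  have h1 : HasFDerivAt (fderiv ℝ w) (fderiv ℝ (fderiv ℝ w) q) q :=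
    ((h.fderiv_right (le_refl 2)).differentiableAt one_ne_zero).hasFDerivAt
  exact (ContinuousLinearMap.apply ℝ ℝ v).hasFDerivAt.comp q h1

lemma pde {u φ : ℝ × ℝ → ℝ} {U : Set (ℝ × ℝ)} (hU : IsOpen U) {x : ℝ × ℝ} (hx : x ∈ U)
    (hφ : ContDiffOn ℝ 2 φ U) (hu : ContDiffAt ℝ 2 u (fmap x))
    (heq : ∀ y ∈ U, fderiv ℝ u (fmap y) (1, 0) = fderiv ℝ φ y (1, 0))
    (heq' : ∀ y ∈ U, fderiv ℝ u (fmap y) (0, 1) = fderiv ℝ φ y (0, 1)) :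
    (fmap x).1 * fderiv ℝ (fderiv ℝ u) (fmap x) (1, 0) (1, 0)
      + (fmap x).2 * fderiv ℝ (fderiv ℝ u) (fmap x) (1, 0) (0, 1) = 0 := by
  set p := fmap x with hp
  set Hu := fderiv ℝ (fderiv ℝ u) p with hHu
  have hφx : ContDiffAt ℝ 2 φ x := hφ.contDiffAt (hU.mem_nhds hx)
  have symm_u : ∀ v w, Hu v w = Hu w v := hu.isSymmSndFDerivAt (by simp)
  have symm_φ : fderiv ℝ (fderiv ℝ φ) x (1,0) (0,1) = fderiv ℝ (fderiv ℝ φ) x (0,1) (1,0) :=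
    hφx.isSymmSndFDerivAt (by simp) _ _
  have hfd : HasFDerivAt fmap (Fd x) x := (hf_deriv x).hasFDerivAt
  -- chain rule for both components
  have key : ∀ v : ℝ × ℝ, (∀ y ∈ U, fderiv ℝ u (fmap y) v = fderiv ℝ φ y v) →
      ∀ w : ℝ × ℝ, fderiv ℝ (fderiv ℝ φ) x w v = Hu (Fd x w) v := by
    intro v hv w
    have hG : HasFDerivAt (fun y => fderiv ℝ u y v)
        ((ContinuousLinearMap.apply ℝ ℝ v).comp Hu) p := hasFDerivAt_fderiv_apply v hu
    have hcomp : HasFDerivAt (fun y => fderiv ℝ u (fmap y) v)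
        (((ContinuousLinearMap.apply ℝ ℝ v).comp Hu).comp (Fd x)) x := by have := hG.comp x hfd; exact this
    have heqev : (fun y => fderiv ℝ u (fmap y) v) =ᶠ[𝓝 x] fun y => fderiv ℝ φ y v := by
      filter_upwards [hU.mem_nhds hx] with y hy using hv y hy
    have hφv : HasFDerivAt (fun y => fderiv ℝ φ y v)
        (((ContinuousLinearMap.apply ℝ ℝ v).comp Hu).comp (Fd x)) x :=
      hcomp.congr_of_eventuallyEq heqev.symm
    have hφv' : HasFDerivAt (fun y => fderiv ℝ φ y v)
        ((ContinuousLinearMap.apply ℝ ℝ v).comp (fderiv ℝ (fderiv ℝ φ) x)) x :=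
      hasFDerivAt_fderiv_apply v hφx
    have huniq := hφv'.unique hφv
    exact ContinuousLinearMap.ext_iff.1 huniq w
  have h12 : fderiv ℝ (fderiv ℝ φ) x (0, 1) (1, 0) = Hu (Fd x (0, 1)) (1, 0) :=
    key (1, 0) heq (0, 1)
  have h21 : fderiv ℝ (fderiv ℝ φ) x (1, 0) (0, 1) = Hu (Fd x (1, 0)) (0, 1) :=
    key (0, 1) heq' (1, 0)
  have hmain : Hu (Fd x (1, 0)) (0, 1) = Hu (Fd x (0, 1)) (1, 0) := by
    rw [← h12, ← h21, symm_φ]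
  have hlin : ∀ (a b : ℝ) (w : ℝ × ℝ), Hu (a, b) w = a * Hu (1, 0) w + b * Hu (0, 1) w := by
    intro a b w
    have hab : ((a, b) : ℝ × ℝ) = a • ((1 : ℝ), (0 : ℝ)) + b • ((0 : ℝ), (1 : ℝ)) := by
      simp [Prod.ext_iff]
    rw [hab, map_add, map_smul, map_smul]
    simp
  have e1eval : Hu (Real.exp x.2, 0) (0, 1)
      = Real.exp x.2 * Hu (1, 0) (0, 1) + 0 * Hu (0, 1) (0, 1) := hlin _ _ _
  have e2eval : Hu (x.1 * Real.exp x.2, Real.exp x.2 + x.2 * Real.exp x.2) (1, 0)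
      = (x.1 * Real.exp x.2) * Hu (1, 0) (1, 0)
        + (Real.exp x.2 + x.2 * Real.exp x.2) * Hu (0, 1) (1, 0) := hlin _ _ _
  have hsym : Hu (0, 1) (1, 0) = Hu (1, 0) (0, 1) := symm_u _ _
  rw [Fd_e1, Fd_e2, e1eval, e2eval, hsym] at hmain
  have hp1 : p.1 = x.1 * Real.exp x.2 := rfl
  have hp2 : p.2 = x.2 * Real.exp x.2 := rfl
  rw [hp1, hp2]
  nlinarith [hmain]

lemma const_G1 {u : ℝ × ℝ → ℝ} {δ : ℝ} (hu : ContDiffOn ℝ 2 u (ball (0 : ℝ × ℝ) δ))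
    (hpde : ∀ p ∈ ball (0 : ℝ × ℝ) δ, p.1 * fderiv ℝ (fderiv ℝ u) p (1, 0) (1, 0)
      + p.2 * fderiv ℝ (fderiv ℝ u) p (1, 0) (0, 1) = 0)
    {p : ℝ × ℝ} (hp : p ∈ ball (0 : ℝ × ℝ) δ) :
    fderiv ℝ u p (1, 0) = fderiv ℝ u 0 (1, 0) := by
  have hpδ : dist p 0 < δ := mem_ball.1 hp
  have hδ : 0 < δ := lt_of_le_of_lt dist_nonneg hpδ
  have h0 : (0 : ℝ × ℝ) ∈ ball (0 : ℝ × ℝ) δ := mem_ball_self hδ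
  set G1 : ℝ × ℝ → ℝ := fun q => fderiv ℝ u q (1, 0) with hG1
  have hmem : ∀ t ∈ Icc (0:ℝ) 1, t • p ∈ ball (0 : ℝ × ℝ) δ := by
    intro t ht
    rw [mem_ball_zero_iff, norm_smul]
    have h1 : ‖t‖ ≤ 1 := by rw [Real.norm_eq_abs, abs_le]; exact ⟨by linarith [ht.1], ht.2⟩
    have h2 : ‖p‖ < δ := mem_ball_zero_iff.1 hp
    nlinarith [norm_nonneg p]
  have hG1d : ∀ q ∈ ball (0 : ℝ × ℝ) δ, HasFDerivAt G1
      ((ContinuousLinearMap.apply ℝ ℝ ((1:ℝ),(0:ℝ))).comp (fderiv ℝ (fderiv ℝ u) q)) q :=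
    fun q hq => hasFDerivAt_fderiv_apply _ (hu.contDiffAt (isOpen_ball.mem_nhds hq))
  have hzero : ∀ q ∈ ball (0 : ℝ × ℝ) δ, fderiv ℝ (fderiv ℝ u) q q (1, 0) = 0 := by
    intro q hq
    have hsymm : ∀ v w, fderiv ℝ (fderiv ℝ u) q v w = fderiv ℝ (fderiv ℝ u) q w v :=
      (hu.contDiffAt (isOpen_ball.mem_nhds hq)).isSymmSndFDerivAt (by simp)
    have hd : (q : ℝ × ℝ) = q.1 • ((1:ℝ),(0:ℝ)) + q.2 • ((0:ℝ),(1:ℝ)) := by simp [Prod.ext_iff]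
    calc fderiv ℝ (fderiv ℝ u) q q (1, 0)
        = fderiv ℝ (fderiv ℝ u) q (q.1 • ((1:ℝ),(0:ℝ)) + q.2 • ((0:ℝ),(1:ℝ))) (1, 0) := by rw [← hd]
      _ = q.1 * fderiv ℝ (fderiv ℝ u) q (1,0) (1,0) + q.2 * fderiv ℝ (fderiv ℝ u) q (0,1) (1,0) := by
          rw [map_add, map_smul, map_smul]; simp
      _ = q.1 * fderiv ℝ (fderiv ℝ u) q (1,0) (1,0) + q.2 * fderiv ℝ (fderiv ℝ u) q (1,0) (0,1) := by
          rw [hsymm (0,1) (1,0)]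
      _ = 0 := hpde q hq
  have hψ : ∀ t : ℝ, t ≠ 0 → t • p ∈ ball (0 : ℝ × ℝ) δ →
      HasDerivAt (fun s : ℝ => G1 (s • p)) 0 t := by
    intro t ht hm
    have h2 : HasDerivAt (fun s : ℝ => s • p) p t := by
      simpa using (hasDerivAt_id t).smul_const p
    have hcomp := (hG1d _ hm).comp_hasDerivAt t h2
    have hval : fderiv ℝ (fderiv ℝ u) (t • p) p (1, 0) = 0 := by
      have h3 := hzero _ hm
      have h4 : fderiv ℝ (fderiv ℝ u) (t • p) (t • p) (1, 0)
          = t * fderiv ℝ (fderiv ℝ u) (t • p) p (1, 0) := by rw [map_smul]; simp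
      rw [h4] at h3
      rcases mul_eq_zero.1 h3 with h | h
      · exact absurd h ht
      · exact h
    simpa [hval, Function.comp_def] using hcomp
  have hconst : ∀ ε ∈ Ioc (0:ℝ) 1, G1 p = G1 (ε • p) := by
    intro ε hε
    have hcont : ContinuousOn (fun s : ℝ => G1 (s • p)) (Icc ε 1) := by
      intro t ht
      have ht' : t ∈ Icc (0:ℝ) 1 := ⟨le_trans hε.1.le ht.1, ht.2⟩
      exact ((hψ t (ne_of_gt (lt_of_lt_of_le hε.1 ht.1)) (hmem t ht')).continuousAt).continuousWithinAt
    have hderiv : ∀ t ∈ Ico ε 1, HasDerivWithinAt (fun s : ℝ => G1 (s • p)) 0 (Ici t) t := by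
      intro t ht
      have ht' : t ∈ Icc (0:ℝ) 1 := ⟨le_trans hε.1.le ht.1, ht.2.le⟩
      exact (hψ t (ne_of_gt (lt_of_lt_of_le hε.1 ht.1)) (hmem t ht')).hasDerivWithinAt
    have := constant_of_has_deriv_right_zero hcont hderiv 1 ⟨hε.2, le_rfl⟩
    simpa using this
  have hlim : Filter.Tendsto (fun ε : ℝ => G1 (ε • p)) (nhdsWithin 0 (Ioi 0)) (nhds (G1 0)) := by
    have hcont0 : ContinuousAt G1 0 := by
      have hc := ((hu.contDiffAt (isOpen_ball.mem_nhds h0)).fderiv_right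
        (m := 1) (by norm_num)).continuousAt
      exact ((ContinuousLinearMap.apply ℝ ℝ ((1:ℝ),(0:ℝ))).continuous.continuousAt).comp hc
    have hsp : Filter.Tendsto (fun ε : ℝ => ε • p) (nhdsWithin 0 (Ioi 0)) (nhds (0 : ℝ × ℝ)) := by
      have : Continuous (fun ε : ℝ => ε • p) := continuous_id.smul continuous_const
      have := this.tendsto 0
      rw [zero_smul] at this
      exact this.mono_left nhdsWithin_le_nhds
    exact hcont0.tendsto.comp hsp
  have hev : ∀ᶠ ε in nhdsWithin (0:ℝ) (Ioi 0), G1 (ε • p) = G1 p := by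
    filter_upwards [Ioc_mem_nhdsGT_of_mem (⟨le_rfl, zero_lt_one⟩ : (0:ℝ) ∈ Ico (0:ℝ) 1)]
      with ε hε using (hconst ε hε).symm
  have : Filter.Tendsto (fun _ : ℝ => G1 p) (nhdsWithin 0 (Ioi 0)) (nhds (G1 0)) :=
    hlim.congr' (by filter_upwards [hev] with ε h using h)
  show G1 p = G1 0
  exact (tendsto_nhds_unique this tendsto_const_nhds).symm


lemma keyB {v : ℝ → ℝ} (hv : ContinuousOn v (Icc 0 (2 * π))) (hper : v (2 * π) = v 0)
    (hgt : ∀ θ ∈ Ioo 0 (2 * π), v 0 < v θ) :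
    ∃ θ₁ θ₂ : ℝ, 0 ≤ θ₁ ∧ θ₁ < θ₂ ∧ θ₂ < 2 * π ∧ v θ₁ = v θ₂ := by
  have hπ : 0 < π := Real.pi_pos
  have hq1 : π / 2 ∈ Ioo 0 (2 * π) := ⟨by linarith, by linarith⟩
  have hq3 : 3 * π / 2 ∈ Ioo 0 (2 * π) := ⟨by linarith, by linarith⟩
  set m := min (v (π / 2)) (v (3 * π / 2)) with hm
  have hv0m : v 0 < m := lt_min (hgt _ hq1) (hgt _ hq3)
  set c := (v 0 + m) / 2 with hc
  have hc1 : v 0 < c := by simp only [hc]; linarith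
  have hc2 : c < m := by simp only [hc]; linarith
  have hcont1 : ContinuousOn v (Icc 0 (π / 2)) :=
    hv.mono (Icc_subset_Icc le_rfl (by linarith))
  have hcont2 : ContinuousOn v (Icc (3 * π / 2) (2 * π)) :=
    hv.mono (Icc_subset_Icc (by linarith) le_rfl)
  have h1 : c ∈ Ioo (v 0) (v (π / 2)) := ⟨hc1, lt_of_lt_of_le hc2 (min_le_left _ _)⟩
  obtain ⟨θ₁, hθ₁, hvθ₁⟩ := intermediate_value_Ioo (by linarith : (0:ℝ) ≤ π / 2) hcont1 h1
  have h2 : c ∈ Ioo (v (2 * π)) (v (3 * π / 2)) := by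
    rw [hper]
    exact ⟨hc1, lt_of_lt_of_le hc2 (min_le_right _ _)⟩
  obtain ⟨θ₂, hθ₂, hvθ₂⟩ :=
    intermediate_value_Ioo' (by linarith : 3 * π / 2 ≤ 2 * π) hcont2 h2
  exact ⟨θ₁, θ₂, hθ₁.1.le, by linarith [hθ₁.2, hθ₂.1], hθ₂.2, by rw [hvθ₁, hvθ₂]⟩

lemma circle_pair {v : ℝ → ℝ} (hv : ContinuousOn v (Icc 0 (2 * π))) (hper : v (2 * π) = v 0) :
    ∃ θ₁ θ₂ : ℝ, 0 ≤ θ₁ ∧ θ₁ < θ₂ ∧ θ₂ < 2 * π ∧ v θ₁ = v θ₂ := by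
  have hπ : 0 < π := Real.pi_pos
  by_cases hca : ∃ θ ∈ Ioo 0 (2 * π), v θ = v 0
  · obtain ⟨θ, hθ, hvθ⟩ := hca
    exact ⟨0, θ, le_rfl, hθ.1, hθ.2, hvθ.symm⟩
  push_neg at hca
  have hsign : (∀ θ ∈ Ioo 0 (2 * π), v 0 < v θ) ∨ ∀ θ ∈ Ioo 0 (2 * π), v θ < v 0 := by
    by_contra hcon
    push_neg at hcon
    obtain ⟨⟨θa, hθa, hva⟩, ⟨θb, hθb, hvb⟩⟩ := hcon
    have hva' : v θa < v 0 := lt_of_le_of_ne hva (hca θa hθa)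
    have hvb' : v 0 < v θb := lt_of_le_of_ne hvb (fun h => hca θb hθb h.symm)
    rcases lt_trichotomy θa θb with h | h | h
    · obtain ⟨θ, hθ, hvθ⟩ := intermediate_value_Ioo h.le
        (hv.mono (Icc_subset_Icc hθa.1.le hθb.2.le)) ⟨hva', hvb'⟩
      exact hca θ ⟨lt_trans hθa.1 hθ.1, lt_trans hθ.2 hθb.2⟩ hvθ
    · rw [h] at hva'; linarith
    · obtain ⟨θ, hθ, hvθ⟩ := intermediate_value_Ioo' h.le
        (hv.mono (Icc_subset_Icc hθb.1.le hθa.2.le)) ⟨hva', hvb'⟩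
      exact hca θ ⟨lt_trans hθb.1 hθ.1, lt_trans hθ.2 hθa.2⟩ hvθ
  rcases hsign with hgt | hlt
  · exact keyB hv hper hgt
  · obtain ⟨θ₁, θ₂, h1, h2, h3, h4⟩ := keyB (v := fun θ => -(v θ)) (hv.neg)
      (by simp [hper]) (fun θ hθ => neg_lt_neg (hlt θ hθ))
    exact ⟨θ₁, θ₂, h1, h2, h3, neg_injective h4⟩

lemma circle_ne {ρ θ₁ θ₂ : ℝ} (hρ : 0 < ρ) (h1 : 0 ≤ θ₁) (h2 : θ₁ < θ₂) (h3 : θ₂ < 2 * π) :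
    ((ρ * cos θ₁, ρ * sin θ₁) : ℝ × ℝ) ≠ (ρ * cos θ₂, ρ * sin θ₂) := by
  intro h
  rw [Prod.ext_iff] at h
  have hcos : cos θ₁ = cos θ₂ :=
    mul_left_cancel₀ (ne_of_gt hρ) h.1
  have hsin : sin θ₁ = sin θ₂ :=
    mul_left_cancel₀ (ne_of_gt hρ) h.2
  have hone : cos (θ₂ - θ₁) = 1 := by
    rw [Real.cos_sub, ← hcos, ← hsin]
    rw [← Real.sin_sq_add_cos_sq θ₁]; ring
  have := (Real.cos_eq_one_iff_of_lt_of_lt (by linarith) (by linarith)).1 hone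
  linarith


lemma Fd_zero : Fd (0 : ℝ × ℝ) = ((ContinuousLinearEquiv.refl ℝ (ℝ × ℝ) :
    (ℝ × ℝ) ≃L[ℝ] ℝ × ℝ) : (ℝ × ℝ) →L[ℝ] ℝ × ℝ) := by
  ext v <;> simp [Fd, L1, L2]

lemma fmap_zero : fmap (0 : ℝ × ℝ) = 0 := by simp [fmap]


lemma local_surj {U : Set (ℝ × ℝ)} (hU : IsOpen U) (h0 : (0 : ℝ × ℝ) ∈ U) :
    ∃ δ > 0, ∀ p ∈ ball (0 : ℝ × ℝ) δ, ∃ x ∈ U, fmap x = p := by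
  have hstrict : HasStrictFDerivAt fmap
      ((ContinuousLinearEquiv.refl ℝ (ℝ × ℝ) : (ℝ × ℝ) ≃L[ℝ] ℝ × ℝ) :
        (ℝ × ℝ) →L[ℝ] ℝ × ℝ) (0 : ℝ × ℝ) := by
    have := hf_deriv (0 : ℝ × ℝ)
    rwa [Fd_zero] at this
  set e := hstrict.toOpenPartialHomeomorph fmap with he
  have hcoe : (e : ℝ × ℝ → ℝ × ℝ) = fmap := hstrict.toOpenPartialHomeomorph_coe
  have hsrc : (0 : ℝ × ℝ) ∈ e.source := hstrict.mem_toOpenPartialHomeomorph_source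
  have htgt : (0 : ℝ × ℝ) ∈ e.target := by
    have := hstrict.image_mem_toOpenPartialHomeomorph_target
    rwa [fmap_zero] at this
  have hsymm0 : e.symm 0 = 0 := by
    have h := e.left_inv hsrc
    rw [hcoe] at h
    rwa [fmap_zero] at h
  have hopen : IsOpen (e.target ∩ e.symm ⁻¹' U) :=
    e.symm.isOpen_inter_preimage hU
  have hmem : (0 : ℝ × ℝ) ∈ e.target ∩ e.symm ⁻¹' U := by
    refine ⟨htgt, ?_⟩
    simp only [mem_preimage, hsymm0]
    exact h0
  obtain ⟨δ, hδ, hball⟩ := Metric.isOpen_iff.1 hopen 0 hmem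
  refine ⟨δ, hδ, fun p hp => ?_⟩
  obtain ⟨hpt, hpU⟩ := hball hp
  refine ⟨e.symm p, hpU, ?_⟩
  have := e.right_inv hpt
  rwa [hcoe] at this


set_option maxHeartbeats 1000000 in
/-- The map f(x₁,x₂) = e^{x₂}(x₁,x₂) is not, on any neighborhood of the origin,
a composition ∇ψ ∘ ∇φ of two gradient local diffeomorphisms: if ∇u ∘ f = ∇φ near
0 with ∇u injective near f(0) = 0, a contradiction follows. Gradients are written
as (∂₁·, ∂₂·) via Fréchet derivatives. -/
theorem stmt_9 :
    let f : ℝ × ℝ → ℝ × ℝ := fun x => (x.1 * Real.exp x.2, x.2 * Real.exp x.2)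
    let grad : (ℝ × ℝ → ℝ) → (ℝ × ℝ) → ℝ × ℝ :=
      fun w p => (fderiv ℝ w p (1, 0), fderiv ℝ w p (0, 1))
    ¬ ∃ (U : Set (ℝ × ℝ)) (u φ : ℝ × ℝ → ℝ), IsOpen U ∧ (0, 0) ∈ U ∧
        ContDiffOn ℝ 2 φ U ∧ ContDiffOn ℝ 2 u (f '' U) ∧
        (∀ x ∈ U, grad u (f x) = grad φ x) ∧
        Set.InjOn (grad u) (f '' U) := by
  intro f grad
  rintro ⟨U, u, φ, hUopen, hU0, hφ, hu, heq, hinj⟩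
  have hu₂ : ContDiffOn ℝ 2 u (fmap '' U) := hu
  have heq₂ : ∀ y ∈ U, (fderiv ℝ u (fmap y) (1, 0), fderiv ℝ u (fmap y) (0, 1))
      = (fderiv ℝ φ y (1, 0), fderiv ℝ φ y (0, 1)) := heq
  have hinj₂ : Set.InjOn (fun p : ℝ × ℝ => (fderiv ℝ u p (1, 0), fderiv ℝ u p (0, 1)))
      (fmap '' U) := hinj
  clear hu heq hinj
  have h0 : (0 : ℝ × ℝ) ∈ U := hU0
  obtain ⟨δ, hδ, hsurj⟩ := local_surj hUopen h0
  have hball_sub : ball (0 : ℝ × ℝ) δ ⊆ fmap '' U := by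
    intro p hp
    obtain ⟨x, hx, hfx⟩ := hsurj p hp
    exact ⟨x, hx, hfx⟩
  have hu' : ContDiffOn ℝ 2 u (ball (0 : ℝ × ℝ) δ) := hu₂.mono hball_sub
  have hpde : ∀ p ∈ ball (0 : ℝ × ℝ) δ,
      p.1 * fderiv ℝ (fderiv ℝ u) p (1, 0) (1, 0)
        + p.2 * fderiv ℝ (fderiv ℝ u) p (1, 0) (0, 1) = 0 := by
    intro p hp
    obtain ⟨x, hx, hfx⟩ := hsurj p hp
    have hux : ContDiffAt ℝ 2 u (fmap x) := by
      rw [hfx]; exact hu'.contDiffAt (isOpen_ball.mem_nhds hp)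
    have h1 : ∀ y ∈ U, fderiv ℝ u (fmap y) (1, 0) = fderiv ℝ φ y (1, 0) := by
      intro y hy
      exact congrArg Prod.fst (heq₂ y hy)
    have h2 : ∀ y ∈ U, fderiv ℝ u (fmap y) (0, 1) = fderiv ℝ φ y (0, 1) := by
      intro y hy
      exact congrArg Prod.snd (heq₂ y hy)
    have := pde hUopen hx hφ hux h1 h2
    rwa [hfx] at this
  have hconst : ∀ p ∈ ball (0 : ℝ × ℝ) δ,
      fderiv ℝ u p (1, 0) = fderiv ℝ u 0 (1, 0) :=
    fun p hp => const_G1 hu' hpde hp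
  have hG2inj : ∀ p ∈ ball (0 : ℝ × ℝ) δ, ∀ q ∈ ball (0 : ℝ × ℝ) δ,
      fderiv ℝ u p (0, 1) = fderiv ℝ u q (0, 1) → p = q := by
    intro p hp q hq h2
    apply hinj₂ (hball_sub hp) (hball_sub hq)
    show (fderiv ℝ u p (1, 0), fderiv ℝ u p (0, 1))
      = (fderiv ℝ u q (1, 0), fderiv ℝ u q (0, 1))
    rw [hconst p hp, hconst q hq, h2]
  set ρ := δ / 2 with hρdef
  have hρ : 0 < ρ := by positivity
  have hparam : ∀ θ : ℝ, ((ρ * cos θ, ρ * sin θ) : ℝ × ℝ) ∈ ball (0 : ℝ × ℝ) δ := by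
    intro θ
    rw [mem_ball_zero_iff, Prod.norm_def]
    simp only [Real.norm_eq_abs]
    apply max_lt <;> rw [abs_mul, abs_of_pos hρ] <;>
      nlinarith [abs_cos_le_one θ, abs_sin_le_one θ]
  set v : ℝ → ℝ := fun θ => fderiv ℝ u (ρ * cos θ, ρ * sin θ) (0, 1) with hv
  have hG2cont : ContinuousOn (fun q : ℝ × ℝ => fderiv ℝ u q (0, 1))
      (ball (0 : ℝ × ℝ) δ) := by
    intro q hq
    have hc := ((hu'.contDiffAt (isOpen_ball.mem_nhds hq)).fderiv_right
      (m := 1) (by norm_num)).continuousAt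
    exact (((ContinuousLinearMap.apply ℝ ℝ ((0:ℝ),(1:ℝ))).continuous.continuousAt).comp
      hc).continuousWithinAt
  have hvcont : ContinuousOn v (Icc 0 (2 * π)) := by
    apply hG2cont.comp (Continuous.continuousOn ((continuous_const.mul Real.continuous_cos).prodMk (continuous_const.mul Real.continuous_sin))) (fun θ _ => hparam θ)
  have hper : v (2 * π) = v 0 := by simp [hv, Real.cos_two_pi, Real.sin_two_pi]
  obtain ⟨θ₁, θ₂, h1, h2, h3, h4⟩ := circle_pair hvcont hper
  have heqpt := hG2inj _ (hparam θ₁) _ (hparam θ₂) h4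
  exact circle_ne hρ h1 h2 h3 heqpt
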